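/- Let X be a Tychonoff space, λ a bornology on X with a closed base, and (Y,ρ) a metric space. If X is a λ_f-space, then C_{λ,ρ}(X,Y) is Dieudonné complete. -/

import Mathlib

open Filter Topology Set UniformConvergence

universe u v

/-- A space is Dieudonné complete if it embeds as a closed subspace of a
product of metric spaces. -/
def DieudonneComplete (X : Type u) [TopologicalSpace X] : Prop :=
  ∃ (ι : Type u) (M : ι → Type u) (m : ∀ i, MetricSpace (M i)) (f : X → ∀ i, M i),
    letI : ∀ i, TopologicalSpace (M i) := fun i => (m i).toUniformSpace.toTopologicalSpace
    Topology.IsClosedEmbedding f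

/-- A bornology (family of nonempty sets covering X, closed under finite unions and
nonempty subsets) which is moreover closed under taking closures (has a closed base). -/
def IsBornologyWithClosedBase {X : Type u} [TopologicalSpace X] (L : Set (Set X)) : Prop :=
  (∀ A ∈ L, A.Nonempty) ∧ (⋃₀ L = univ) ∧ (∀ A ∈ L, ∀ B ∈ L, A ∪ B ∈ L) ∧
    (∀ A ∈ L, ∀ B : Set X, B.Nonempty → B ⊆ A → B ∈ L) ∧ (∀ A ∈ L, closure A ∈ L)

/-- X is a λ_f-space: a map to any Tychonoff space is continuous iff its restriction to
the closure of each member of L is continuous. -/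
def IsLambdaFSpace (X : Type u) [TopologicalSpace X] (L : Set (Set X)) : Prop :=
  ∀ (Z : Type v) (tZ : TopologicalSpace Z), @T35Space Z tZ →
    ∀ f : X → Z, @Continuous X Z _ tZ f ↔ ∀ A ∈ L, @ContinuousOn X Z _ tZ f (closure A)

/-- C_{λ,ρ}(X,Y): the continuous maps from X to the metric space Y, carrying the
uniformity (hence topology) of uniform convergence on members of L. -/
def CL (X : Type u) [TopologicalSpace X] (Y : Type v) [MetricSpace Y]
    (L : Set (Set X)) : Type (max u v) := C(X, Y)

noncomputable instance CL.instUniformSpace (X : Type u) [TopologicalSpace X] (Y : Type v)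
    [MetricSpace Y] (L : Set (Set X)) : UniformSpace (CL X Y L) :=
  UniformSpace.comap (fun f => UniformOnFun.ofFun L (⇑(show C(X,Y) from f)))
    (UniformOnFun.uniformSpace X Y L)

section Aux

variable {X : Type u} [TopologicalSpace X] {Y : Type u} [MetricSpace Y] {L : Set (Set X)}

/-- Countable generation of the uniformity of uniform convergence into a metric space. -/
lemma auxCG (S : Set X) : Filter.IsCountablyGenerated (uniformity (↥S →ᵤ Y)) := by
  obtain ⟨b, hb⟩ := (uniformity Y).exists_antitone_basis
  exact (UniformFun.hasBasis_uniformity_of_basis ↥S Y hb.toHasBasis).isCountablyGenerated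

/-- The restriction uniform structure on `CL X Y L` associated to a subset `S`. -/
noncomputable def auxF (L : Set (Set X)) (S : Set X) : UniformSpace (CL X Y L) :=
  UniformSpace.comap (fun f => UniformFun.ofFun (S.restrict ⇑(show C(X,Y) from f)))
    (UniformFun.uniformSpace ↥S Y)

lemma auxCL_eq :
    CL.instUniformSpace X Y L = ⨅ i : {A : Set X // A ∈ L}, auxF L i.1 := by
  have h : CL.instUniformSpace X Y L =
      UniformSpace.comap (fun f => UniformOnFun.ofFun L (⇑(show C(X,Y) from f)))
        (⨅ (s : Set X) (_ : s ∈ L),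
          UniformSpace.comap (UniformFun.ofFun ∘ s.restrict ∘ UniformOnFun.toFun L)
            (UniformFun.uniformSpace ↥s Y)) := rfl
  rw [h, iInf_subtype']
  rw [UniformSpace.comap_iInf]
  exact iInf_congr fun i => by rw [← UniformSpace.comap_comap]; rfl

lemma auxF_closure_le (A : Set X) : (auxF L (closure A) : UniformSpace (CL X Y L)) ≤ auxF L A := by
  have hpre : UniformContinuous
      (fun u : ↥(closure A) →ᵤ Y =>
        UniformFun.ofFun (UniformFun.toFun u ∘ Set.inclusion (subset_closure : A ⊆ closure A))) :=
    UniformFun.precomp_uniformContinuous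
  rw [uniformContinuous_iff] at hpre
  have : (auxF L A : UniformSpace (CL X Y L)) =
      UniformSpace.comap (fun f : CL X Y L =>
          UniformFun.ofFun ((closure A).restrict ⇑(show C(X,Y) from f)))
        (UniformSpace.comap
          (fun u : ↥(closure A) →ᵤ Y =>
            UniformFun.ofFun (UniformFun.toFun u ∘ Set.inclusion (subset_closure : A ⊆ closure A)))
          (UniformFun.uniformSpace ↥A Y)) := by
    rw [← UniformSpace.comap_comap]; rfl
  rw [this]
  exact UniformSpace.comap_mono hpre

end Aux

/-- If X is a λ_f-space then C_{λ,ρ}(X,Y) is Dieudonné complete. -/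
theorem dieudonneComplete_CL_of_lambdaF (X : Type u) [TopologicalSpace X] [T35Space X]
    (Y : Type u) [MetricSpace Y] (L : Set (Set X)) (hL : IsBornologyWithClosedBase L)
    (hX : IsLambdaFSpace.{u, u} X L) :
    DieudonneComplete (CL X Y L) := by
  classical
  obtain ⟨hne, hcov, hcup, hdown, hclos⟩ := hL
  set ι := {A : Set X // A ∈ L} with hι
  refine ⟨ι, fun i => ↥(closure i.1) →ᵤ Y,
    fun i => letI := auxCG (Y := Y) (closure i.1); UniformSpace.metricSpace _,
    fun f i => UniformFun.ofFun ((closure i.1).restrict ⇑(show C(X,Y) from f)), ?_⟩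
  set Φ : CL X Y L → ∀ i : ι, ↥(closure i.1) →ᵤ Y :=
    fun f i => UniformFun.ofFun ((closure i.1).restrict ⇑(show C(X,Y) from f)) with hΦ
  show IsClosedEmbedding Φ
  -- uniform inducing
  have hUS : (UniformSpace.comap Φ (Pi.uniformSpace (fun i : ι => ↥(closure i.1) →ᵤ Y)))
      = CL.instUniformSpace X Y L := by
    rw [Pi.uniformSpace_eq, UniformSpace.comap_iInf, auxCL_eq]
    have hPi : ∀ i : ι,
        UniformSpace.comap Φ (UniformSpace.comap (Function.eval i)
          (UniformFun.uniformSpace ↥(closure i.1) Y)) = auxF L (closure i.1) := fun i => by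
      rw [← UniformSpace.comap_comap]; rfl
    simp only [hPi]
    refine le_antisymm (le_iInf fun i => iInf_le_of_le i (auxF_closure_le i.1))
      (le_iInf fun i => iInf_le_of_le ⟨closure i.1, hclos i.1 i.2⟩ (le_of_eq rfl))
  have hui : IsUniformInducing Φ := isUniformInducing_iff_uniformSpace.mpr hUS
  have hinj : Function.Injective Φ := by
    intro f g hfg
    have : (show C(X,Y) from f) = (show C(X,Y) from g) := by
      ext x
      have hx : x ∈ ⋃₀ L := by rw [hcov]; trivial
      obtain ⟨A, hA, hxA⟩ := hx
      exact congrFun (congrArg UniformFun.toFun (congrFun hfg ⟨A, hA⟩))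
        ⟨x, subset_closure hxA⟩
    exact this
  refine ⟨(IsUniformEmbedding.mk hui hinj).isEmbedding, ?_⟩
  -- closed range
  refine isClosed_of_closure_subset fun g hg => ?_
  have hcompat : ∀ (i j : ι) (x : X) (hxi : x ∈ closure i.1) (hxj : x ∈ closure j.1),
      UniformFun.toFun (g i) ⟨x, hxi⟩ = UniformFun.toFun (g j) ⟨x, hxj⟩ := by
    intro i j x hxi hxj
    have hclosed : IsClosed {p : ∀ i : ι, ↥(closure i.1) →ᵤ Y |
        UniformFun.toFun (p i) ⟨x, hxi⟩ = UniformFun.toFun (p j) ⟨x, hxj⟩} :=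
      isClosed_eq
        (((UniformFun.uniformContinuous_eval Y (⟨x, hxi⟩ : ↥(closure i.1))).continuous).comp
          (continuous_apply i))
        (((UniformFun.uniformContinuous_eval Y (⟨x, hxj⟩ : ↥(closure j.1))).continuous).comp
          (continuous_apply j))
    refine (hclosed.closure_subset_iff.mpr ?_) hg
    rintro p ⟨f, rfl⟩
    rfl
  have hconti : ∀ i : ι, Continuous (UniformFun.toFun (g i)) := by
    intro i
    have hclosed : IsClosed {p : ∀ i : ι, ↥(closure i.1) →ᵤ Y |
        Continuous (UniformFun.toFun (p i))} := by
      have hc2 := UniformFun.isClosed_setOf_continuous (α := ↥(closure i.1)) (β := Y)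
      exact hc2.preimage (continuous_apply i)
    refine (hclosed.closure_subset_iff.mpr ?_) hg
    rintro p ⟨f, rfl⟩
    exact (map_continuous (show C(X,Y) from f)).comp continuous_subtype_val
  have hsel : ∀ x : X, ∃ i : ι, x ∈ closure i.1 := by
    intro x
    have hx : x ∈ ⋃₀ L := by rw [hcov]; trivial
    obtain ⟨A, hA, hxA⟩ := hx
    exact ⟨⟨A, hA⟩, subset_closure hxA⟩
  choose sel hsel' using hsel
  set h : X → Y := fun x => UniformFun.toFun (g (sel x)) ⟨x, hsel' x⟩ with hh
  have hkey : ∀ (i : ι) (x : X) (hx : x ∈ closure i.1),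
      h x = UniformFun.toFun (g i) ⟨x, hx⟩ := fun i x hx => hcompat (sel x) i x (hsel' x) hx
  have hrestr : ∀ i : ι, (closure i.1).restrict h = UniformFun.toFun (g i) := by
    intro i
    funext x
    exact hkey i x.1 x.2
  have hc : Continuous h := by
    refine (hX Y _ inferInstance h).mpr ?_
    intro A hA
    rw [continuousOn_iff_continuous_restrict]
    convert hconti ⟨A, hA⟩ using 1
    funext x
    exact hkey ⟨A, hA⟩ x.1 x.2
  refine ⟨show CL X Y L from (⟨h, hc⟩ : C(X,Y)), ?_⟩
  funext i
  show UniformFun.ofFun ((closure i.1).restrict h) = g i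
  rw [hrestr i, UniformFun.ofFun_toFun]
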